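/- For λ > 0, y > 0, 0 < t < y and |ρ| ≤ 1, one has |(e^{-λy} + e^{λy})/(e^{-λ(y-ρt)} + e^{λ(y-ρt)}) - e^{λρt}| ≤ e^{λρt}·(e^{-2λy} + e^{-2λ(y-t)}). -/

import Mathlib

/-- The ratio of hyperbolic cosines is close to `e^{λρt}`. -/
theorem cosh_ratio_close_to_exp (lam y t ρ : ℝ) (hlam : 0 < lam) (hy : 0 < y)
    (ht₀ : 0 < t) (hty : t < y) (hρ : |ρ| ≤ 1) :
    |(Real.exp (-(lam * y)) + Real.exp (lam * y)) /
        (Real.exp (-(lam * (y - ρ * t))) + Real.exp (lam * (y - ρ * t))) -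
      Real.exp (lam * ρ * t)| ≤
      Real.exp (lam * ρ * t) *
        (Real.exp (-(2 * lam * y)) + Real.exp (-(2 * lam * (y - t)))) := by
  have hρ1 : ρ ≤ 1 := le_trans (le_abs_self ρ) hρ
  have hρ2 : -1 ≤ ρ := neg_le_of_abs_le hρ
  set a := lam * y with ha
  set b := lam * (y - ρ * t) with hb
  have hρt : ρ * t ≤ t := by nlinarith
  have hbb : lam * (y - t) ≤ b := by rw [hb]; nlinarith
  have hbpos : 0 < b := lt_of_lt_of_le (by nlinarith) hbb
  have hden : 0 < Real.exp (-b) + Real.exp b := by positivity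
  have hrt : lam * ρ * t = a - b := by rw [ha, hb]; ring
  have hdiff : (Real.exp (-a) + Real.exp a) / (Real.exp (-b) + Real.exp b)
      - Real.exp (lam * ρ * t)
      = (Real.exp (-a) - Real.exp (a - 2 * b)) / (Real.exp (-b) + Real.exp b) := by
    rw [hrt, div_sub' (ne_of_gt hden)]
    congr 1
    rw [add_mul, ← Real.exp_add, ← Real.exp_add]
    ring_nf
  rw [hdiff, abs_div, abs_of_pos hden]
  have hnum : |Real.exp (-a) - Real.exp (a - 2 * b)| ≤
      Real.exp (-a) + Real.exp (a - 2 * b) := by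
    rw [abs_sub_le_iff]
    constructor <;> nlinarith [Real.exp_pos (-a), Real.exp_pos (a - 2 * b)]
  calc |Real.exp (-a) - Real.exp (a - 2 * b)| / (Real.exp (-b) + Real.exp b)
      ≤ (Real.exp (-a) + Real.exp (a - 2 * b)) / Real.exp b := by
        apply div_le_div₀ (by positivity) hnum (Real.exp_pos b)
        nlinarith [Real.exp_pos (-b)]
    _ = Real.exp (-a - b) + Real.exp (a - 2 * b - b) := by
        rw [add_div, ← Real.exp_sub, ← Real.exp_sub]
    _ ≤ Real.exp (lam * ρ * t + -(2 * lam * y)) + Real.exp (lam * ρ * t + -(2 * lam * (y - t))) := by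
        apply add_le_add (le_of_eq (by rw [hrt, ha]; ring_nf))
        exact Real.exp_le_exp.2 (by rw [hrt]; nlinarith)
    _ = Real.exp (lam * ρ * t) * (Real.exp (-(2 * lam * y)) + Real.exp (-(2 * lam * (y - t)))) := by
        rw [Real.exp_add, Real.exp_add, mul_add]
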